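/- arXiv:1903.07459 — 2 statements merged into one kernel-verified Lean document; each statement's English description precedes it below -/
import Mathlib

section
/- The linear code C̄₂ contains exactly p^{2m+1} codewords; equivalently, the F_p-linear parametrization map sending (a, b, h) ∈ F_q × F_q × F_p to the word (Tr(a·x^{p^l+1} + b·x) + h)_{x ∈ F_q} is injective, so C̄₂ has dimension 2m+1 over F_p. -/
set_option linter.unusedSectionVars false

section aux
variable (p : ℕ) [Fact p.Prime] {F : Type} [Field F] [Fintype F] [Algebra (ZMod p) F]

lemma trace_frob [CharP F p] (x : F) :
    Algebra.trace (ZMod p) F (x ^ p) = Algebra.trace (ZMod p) F x := by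
  let e : F ≃ₐ[ZMod p] F := AlgEquiv.ofRingEquiv (f := frobeniusEquiv F p) (by
    intro c
    show (algebraMap (ZMod p) F c) ^ p = _
    rw [← map_pow, ZMod.pow_card])
  have := Algebra.trace_eq_of_algEquiv e x
  simpa [e, AlgEquiv.ofRingEquiv, frobenius_def] using this

lemma trace_frob_pow [CharP F p] (k : ℕ) (x : F) :
    Algebra.trace (ZMod p) F (x ^ p ^ k) = Algebra.trace (ZMod p) F x := by
  induction k with
  | zero => simp
  | succ n ih => rw [pow_succ, pow_mul, trace_frob, ih]

lemma frob_pow_inj [CharP F p] (k : ℕ) {x y : F} (h : x ^ p ^ k = y ^ p ^ k) : x = y := by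
  have h2 := sub_pow_char_pow (R := F) (p := p) x y (n := k)
  rw [h, sub_self] at h2
  exact sub_eq_zero.mp (pow_eq_zero_iff (n := p ^ k)
    ((Nat.pow_pos (n := k) (Fact.out : p.Prime).pos).ne') |>.mp h2)

lemma fixed_mul [CharP F p] (a k : ℕ) (ha : ∀ x : F, x ^ p ^ a = x) :
    ∀ x : F, x ^ p ^ (a * k) = x := by
  induction k with
  | zero => simp
  | succ n ih => intro x; rw [Nat.mul_succ, pow_add, pow_mul, ih, ha]

lemma gcd_fixed [CharP F p] : ∀ a b : ℕ, (∀ x : F, x ^ p ^ a = x) → (∀ x : F, x ^ p ^ b = x) →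
    ∀ x : F, x ^ p ^ Nat.gcd a b = x := by
  intro a b
  induction a, b using Nat.gcd.induction with
  | H0 n => intro _ hn; simpa using hn
  | H1 m n hm ih =>
    intro hmfix hnfix
    rw [Nat.gcd_rec]
    refine ih ?_ hmfix
    intro x
    apply frob_pow_inj p (m * (n / m))
    rw [← pow_mul, ← pow_add, Nat.mod_add_div, hnfix, fixed_mul p m (n / m) hmfix x]

lemma card_le_of_fixed (g : ℕ) (hg : 1 ≤ g) (hfix : ∀ x : F, x ^ p ^ g = x) :
    Fintype.card F ≤ p ^ g := by
  classical
  have hp : 1 < p := (Fact.out : p.Prime).one_lt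
  have hpg : 1 < p ^ g := Nat.one_lt_pow (by omega) hp
  set f : Polynomial F := Polynomial.X ^ p ^ g - Polynomial.X with hf
  have hfne : f ≠ 0 := FiniteField.X_pow_card_sub_X_ne_zero F hpg
  have hdeg : f.natDegree = p ^ g := FiniteField.X_pow_card_sub_X_natDegree_eq F hpg
  have hsub : (Finset.univ : Finset F) ⊆ f.roots.toFinset := by
    intro x _
    rw [Multiset.mem_toFinset, Polynomial.mem_roots hfne]
    simp [hf, hfix x, sub_self]
  calc Fintype.card F ≤ f.roots.toFinset.card := Finset.card_le_card hsub
    _ ≤ Multiset.card f.roots := f.roots.toFinset_card_le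
    _ ≤ f.natDegree := f.card_roots'
    _ = p ^ g := hdeg

lemma kernel_lemma (m l : ℕ) (hm : 3 ≤ m) (hl : 1 ≤ l) (hml : Nat.gcd m l = 1)
    (hF : Fintype.card F = p ^ m) (a b : F) (h : ZMod p)
    (H : ∀ x : F, Algebra.trace (ZMod p) F (a * x ^ (p ^ l + 1) + b * x) + h = 0) :
    a = 0 ∧ b = 0 ∧ h = 0 := by
  haveI : CharP F p := charP_of_injective_algebraMap (algebraMap (ZMod p) F).injective p
  set T := Algebra.trace (ZMod p) F with hT
  have hp1 : 1 < p := (Fact.out : p.Prime).one_lt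
  have nd := traceForm_nondegenerate (ZMod p) F
  have h0 : h = 0 := by
    have := H 0
    simpa [zero_pow, (Nat.pow_pos (n := l) (by omega : 0 < p)).ne'] using this
  have H' : ∀ x, T (a * x ^ (p ^ l + 1) + b * x) = 0 := fun x => by
    have := H x; rw [h0, add_zero] at this; exact this
  have pow_card : ∀ x : F, x ^ p ^ m = x := fun x => by
    rw [← hF]; exact FiniteField.pow_card x
  set k := l * (m - 1) with hkdef
  have hlk : ∀ y : F, y ^ (p ^ l * p ^ k) = y := by
    intro y
    rw [← pow_add]
    have h1 : l + k = m * l := by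
      have h2 : m - 1 + 1 = m := by omega
      calc l + l * (m - 1) = l * ((m - 1) + 1) := by ring
        _ = l * m := by rw [h2]
        _ = m * l := by ring
    rw [h1, fixed_mul p m l pow_card y]
  have trace_shift : ∀ x y : F, T (a * (x * y ^ (p ^ l))) = T ((a * x) ^ (p ^ k) * y) := by
    intro x y
    have h1 := (trace_frob_pow p (F := F) k (a * (x * y ^ (p ^ l)))).symm
    rw [← hT] at h1
    rw [h1]
    congr 1
    calc (a * (x * y ^ p ^ l)) ^ p ^ k = (a * x) ^ p ^ k * (y ^ p ^ l) ^ p ^ k := by ring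
      _ = (a * x) ^ p ^ k * y ^ (p ^ l * p ^ k) := by rw [← pow_mul]
      _ = (a * x) ^ p ^ k * y := by rw [hlk y]
  have Hbil : ∀ x y : F, T ((a * x ^ (p ^ l) + (a * x) ^ (p ^ k)) * y) = 0 := by
    intro x y
    have hx := H' x; have hy := H' y; have hxy := H' (x + y)
    have hexp : a * (x + y) ^ (p ^ l + 1) + b * (x + y)
        = (a * x ^ (p ^ l + 1) + b * x) + (a * y ^ (p ^ l + 1) + b * y)
          + (a * (x ^ (p ^ l) * y) + a * (x * y ^ (p ^ l))) := by
      rw [pow_succ (x + y), add_pow_char_pow, pow_succ x, pow_succ y]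
      ring
    rw [hexp, map_add, map_add, hx, hy, map_add, zero_add, zero_add] at hxy
    rw [trace_shift x y] at hxy
    rw [add_mul, map_add]
    rw [show a * x ^ (p ^ l) * y = a * (x ^ (p ^ l) * y) from mul_assoc _ _ _]
    exact hxy
  have Hx : ∀ x : F, a * x ^ (p ^ l) + (a * x) ^ (p ^ k) = 0 := by
    intro x
    exact nd.1 _ (fun y => by rw [Algebra.traceForm_apply]; exact Hbil x y)
  have ha : a = 0 := by
    by_contra hane
    have h1 : a + a ^ (p ^ k) = 0 := by have := Hx 1; simpa using this
    have hak : a ^ (p ^ k) = -a := by linear_combination h1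
    have hfix : ∀ x : F, x ^ (p ^ l) = x ^ (p ^ k) := by
      intro x
      have h2 := Hx x
      rw [mul_pow, hak] at h2
      have h3 : a * (x ^ (p ^ l) - x ^ (p ^ k)) = 0 := by linear_combination h2
      rcases mul_eq_zero.mp h3 with h4 | h4
      · exact absurd h4 hane
      · exact sub_eq_zero.mp h4
    have hd : ∀ x : F, x ^ p ^ (l * (m - 2)) = x := by
      intro x
      apply frob_pow_inj p l
      rw [← pow_mul, ← pow_add]
      have h5 : l * (m - 2) + l = k := by
        have h6 : m - 2 + 1 = m - 1 := by omega
        calc l * (m - 2) + l = l * ((m - 2) + 1) := by ring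
          _ = l * (m - 1) := by rw [h6]
      rw [h5]
      exact (hfix x).symm
    set g := Nat.gcd (l * (m - 2)) m with hgdef
    have hgfix := gcd_fixed p _ _ hd pow_card
    have hgm : g ∣ m := Nat.gcd_dvd_right _ _
    have hcop : Nat.Coprime g l := Nat.Coprime.coprime_dvd_left hgm hml
    have hg2 : g ∣ 2 := by
      have h4 : g ∣ l * (m - 2) := Nat.gcd_dvd_left _ _
      have h5 : g ∣ (m - 2) := hcop.dvd_of_dvd_mul_left h4
      have h6 := Nat.dvd_sub hgm h5
      rwa [show m - (m - 2) = 2 by omega] at h6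
    have hgpos : 1 ≤ g := Nat.gcd_pos_of_pos_right _ (by omega)
    have hle := card_le_of_fixed p g hgpos hgfix
    rw [hF] at hle
    have h7 : p ^ m ≤ p ^ 2 :=
      le_trans hle (Nat.pow_le_pow_right (by omega) (Nat.le_of_dvd (by norm_num) hg2))
    have h8 : p ^ 2 < p ^ m := Nat.pow_lt_pow_right hp1 (by omega)
    omega
  have hb : b = 0 := by
    refine nd.1 _ (fun y => ?_)
    rw [Algebra.traceForm_apply]
    have := H' y
    rw [ha] at this
    simpa using this
  exact ⟨ha, hb, h0⟩

end aux

def codeC2 (p l : ℕ) (F : Type) [Field F] [Fintype F] [Algebra (ZMod p) F] :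
    Set (F → ZMod p) :=
  {w | ∃ a b : F, ∃ h : ZMod p, ∀ x : F,
    w x = Algebra.trace (ZMod p) F (a * x ^ (p ^ l + 1) + b * x) + h}

theorem stmt_3 (p m l : ℕ) [Fact p.Prime] (hodd : Odd p) (hm : 3 ≤ m) (hl : 1 ≤ l)
    (hml : Nat.gcd m l = 1) (F : Type) [Field F] [Fintype F] [Algebra (ZMod p) F]
    (hF : Fintype.card F = p ^ m) :
    Function.Injective (fun t : F × F × ZMod p => fun x : F =>
      Algebra.trace (ZMod p) F (t.1 * x ^ (p ^ l + 1) + t.2.1 * x) + t.2.2)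
    ∧ Nat.card (codeC2 p l F) = p ^ (2 * m + 1) := by
  set f : F × F × ZMod p → (F → ZMod p) := fun t => fun x : F =>
      Algebra.trace (ZMod p) F (t.1 * x ^ (p ^ l + 1) + t.2.1 * x) + t.2.2 with hfdef
  have hinj : Function.Injective f := by
    rintro ⟨a1, b1, h1⟩ ⟨a2, b2, h2⟩ heq
    have key := kernel_lemma p m l hm hl hml hF (a1 - a2) (b1 - b2) (h1 - h2) (fun x => by
      have hx := congrFun heq x
      simp only [hfdef] at hx
      rw [show (a1 - a2) * x ^ (p ^ l + 1) + (b1 - b2) * x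
          = (a1 * x ^ (p ^ l + 1) + b1 * x) - (a2 * x ^ (p ^ l + 1) + b2 * x) by ring, map_sub]
      linear_combination hx)
    obtain ⟨ka, kb, kh⟩ := key
    have e1 : a1 = a2 := sub_eq_zero.mp ka
    have e2 : b1 = b2 := sub_eq_zero.mp kb
    have e3 : h1 = h2 := sub_eq_zero.mp kh
    simp [e1, e2, e3]
  refine ⟨hinj, ?_⟩
  have hrange : codeC2 p l F = Set.range f := by
    ext w
    constructor
    · rintro ⟨a, b, h, hw⟩
      exact ⟨(a, b, h), funext fun x => (hw x).symm⟩
    · rintro ⟨⟨a, b, h⟩, rfl⟩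
      exact ⟨a, b, h, fun x => rfl⟩
  rw [hrange, Nat.card_range_of_injective hinj]
  have hzp : Nat.card (ZMod p) = p := Nat.card_zmod p
  have hcF : Nat.card F = p ^ m := by rw [Nat.card_eq_fintype_card, hF]
  rw [Nat.card_prod, Nat.card_prod, hzp, hcF]
  rw [pow_succ, two_mul, pow_add]
  ring
end

section
/- For every integer i > 0 such that C̄₁ has at least one codeword of Hamming weight i, there exists a positive integer λ such that the pair (F_q, B_i) is a 2-(p^m, i, λ) design, where B_i is the set of supports of the codewords of C̄₁ of Hamming weight i; that is, every 2-element subset of F_q is contained in exactly λ members of B_i. -/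
def codeC1 (p l : ℕ) (F : Type) [Field F] [Fintype F] [Algebra (ZMod p) F] :
    Set (F → ZMod p) :=
  {w | ∃ a b c : F, ∃ h : ZMod p, ∀ x : F,
    w x = Algebra.trace (ZMod p) F (a * x ^ (p ^ l + 1) + b * x ^ 2 + c * x) + h}

def hwt {n : ℕ} {F : Type} [Fintype F] (c : F → ZMod n) : ℕ :=
  (Finset.univ.filter fun x => c x ≠ 0).card

def suppF {n : ℕ} {F : Type} [Fintype F] (c : F → ZMod n) : Finset F :=
  Finset.univ.filter fun x => c x ≠ 0

def blocks1 (p l : ℕ) (F : Type) [Field F] [Fintype F] [Algebra (ZMod p) F] (i : ℕ) :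
    Set (Finset F) :=
  {S | ∃ c ∈ codeC1 p l F, hwt c = i ∧ suppF c = S}

section Aux

variable (p m l : ℕ) [Fact p.Prime] (F : Type) [Field F] [Fintype F] [Algebra (ZMod p) F]

lemma charF : CharP F p :=
  charP_of_injective_algebraMap (algebraMap (ZMod p) F).injective p

lemma pow_pow_reduce (hF : Fintype.card F = p ^ m) (x : F) (k r : ℕ) :
    x ^ p ^ (m * k + r) = x ^ p ^ r := by
  induction k with
  | zero => simp
  | succ k ih =>
    have h1 : m * (k + 1) + r = (m * k + r) + m := by ring
    rw [h1, pow_add, pow_mul, ← hF, FiniteField.pow_card, ih]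

lemma frob_inv (hF : Fintype.card F = p ^ m) (hm : 1 ≤ m) (s : F) :
    (s ^ p ^ ((m - 1) * l)) ^ p ^ l = s := by
  rw [← pow_mul, ← pow_add]
  have h1 : (m - 1) * l + l = m * l + 0 := by
    obtain ⟨n, rfl⟩ := Nat.exists_eq_add_of_le hm
    simp only [Nat.add_sub_cancel_left]
    ring
  rw [h1, pow_pow_reduce p m F hF, pow_zero, pow_one]

lemma tr_frob (y : F) :
    Algebra.trace (ZMod p) F (y ^ p) = Algebra.trace (ZMod p) F y := by
  haveI := charF p F
  let e : F ≃ₐ[ZMod p] F :=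
    AlgEquiv.ofRingEquiv (f := frobeniusEquiv F p) (fun r => by
      simp only [frobeniusEquiv_def, ← map_pow, ZMod.pow_card])
  have := Algebra.trace_eq_of_algEquiv e y
  simpa [e, AlgEquiv.ofRingEquiv, frobeniusEquiv_def, frobenius_def] using this

lemma tr_frob_pow (k : ℕ) (y : F) :
    Algebra.trace (ZMod p) F (y ^ p ^ k) = Algebra.trace (ZMod p) F y := by
  induction k with
  | zero => simp
  | succ k ih => rw [pow_succ, pow_mul, tr_frob, ih]

lemma code_affine (hF : Fintype.card F = p ^ m) (hm : 1 ≤ m) (v u : F) {w : F → ZMod p}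
    (hw : w ∈ codeC1 p l F) : (fun x => w (v * x + u)) ∈ codeC1 p l F := by
  obtain ⟨a, b, c, h, hwdef⟩ := hw
  haveI := charF p F
  set t : F := (a * v ^ p ^ l * u) ^ (p ^ ((m - 1) * l)) with ht
  refine ⟨a * v ^ (p ^ l + 1), b * v ^ 2,
    a * u ^ p ^ l * v + 2 * b * u * v + c * v + t,
    h + Algebra.trace (ZMod p) F (a * u ^ (p ^ l + 1) + b * u ^ 2 + c * u), fun x => ?_⟩
  show w (v * x + u) = _
  rw [hwdef]
  have htp : t ^ p ^ l = a * v ^ p ^ l * u := frob_inv p m l F hF hm _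
  have key : a * (v * x + u) ^ (p ^ l + 1) + b * (v * x + u) ^ 2 + c * (v * x + u)
      = ((a * v ^ (p ^ l + 1)) * x ^ (p ^ l + 1) + (b * v ^ 2) * x ^ 2
          + (a * u ^ p ^ l * v + 2 * b * u * v + c * v) * x)
        + (t * x) ^ p ^ l
        + (a * u ^ (p ^ l + 1) + b * u ^ 2 + c * u) := by
    have h1 : (v * x + u) ^ (p ^ l + 1) = (v * x + u) ^ p ^ l * (v * x + u) := pow_succ _ _
    have h2 : x ^ (p ^ l + 1) = x ^ p ^ l * x := pow_succ _ _
    have h3 : u ^ (p ^ l + 1) = u ^ p ^ l * u := pow_succ _ _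
    have h4 : v ^ (p ^ l + 1) = v ^ p ^ l * v := pow_succ _ _
    have hfrob : (v * x + u) ^ p ^ l = v ^ p ^ l * x ^ p ^ l + u ^ p ^ l := by
      rw [add_pow_char_pow, mul_pow]
    rw [h1, h2, h3, h4, hfrob, mul_pow t x, htp]
    ring
  rw [key]
  have hsplit : (a * v ^ (p ^ l + 1)) * x ^ (p ^ l + 1) + (b * v ^ 2) * x ^ 2
      + (a * u ^ p ^ l * v + 2 * b * u * v + c * v + t) * x
      = ((a * v ^ (p ^ l + 1)) * x ^ (p ^ l + 1) + (b * v ^ 2) * x ^ 2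
          + (a * u ^ p ^ l * v + 2 * b * u * v + c * v) * x) + t * x := by ring
  rw [hsplit]
  simp only [map_add]
  rw [tr_frob_pow p F l (t * x)]
  ring

lemma supp_hwt_affine [DecidableEq F] (hF : Fintype.card F = p ^ m) (hm : 1 ≤ m)
    (i : ℕ) (v u : F) (hv : v ≠ 0) {S : Finset F} (hS : S ∈ blocks1 p l F i) :
    S.image (fun y => v * y + u) ∈ blocks1 p l F i := by
  obtain ⟨c, hc, hwtc, hsupp⟩ := hS
  have hinv : ∀ x : F, v * (v⁻¹ * x + -(v⁻¹ * u)) + u = x := by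
    intro x; field_simp; ring
  refine ⟨fun x => c (v⁻¹ * x + -(v⁻¹ * u)), code_affine p m l F hF hm _ _ hc, ?_, ?_⟩
  · -- weight
    show (Finset.univ.filter fun x => c (v⁻¹ * x + -(v⁻¹ * u)) ≠ 0).card = i
    rw [← hwtc]
    apply Finset.card_nbij (i := fun x => v⁻¹ * x + -(v⁻¹ * u))
    · intro x hx
      simp only [Finset.mem_coe, Finset.mem_filter, Finset.mem_univ, true_and] at hx ⊢
      exact hx
    · intro x hx y hy hxy
      have := congrArg (fun z => v * z + u) hxy
      simpa [hinv] using this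
    · intro y hy
      simp only [Finset.coe_filter, Set.mem_setOf_eq, Set.mem_image] at hy ⊢
      refine ⟨v * y + u, ?_, ?_⟩
      · constructor
        · simp
        · rw [show v⁻¹ * (v * y + u) + -(v⁻¹ * u) = y by field_simp; ring]
          exact hy.2
      · field_simp; ring
  · -- support
    ext z
    simp only [suppF, Finset.mem_filter, Finset.mem_univ, true_and, Finset.mem_image]
    constructor
    · intro hz
      refine ⟨v⁻¹ * z + -(v⁻¹ * u), ?_, hinv z⟩
      rw [← hsupp]
      simpa [suppF] using hz
    · rintro ⟨y, hy, rfl⟩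
      rw [← hsupp] at hy
      simp only [suppF, Finset.mem_filter, Finset.mem_univ, true_and] at hy
      rw [show v⁻¹ * (v * y + u) + -(v⁻¹ * u) = y by field_simp; ring]
      exact hy

lemma exists_affine_two [DecidableEq F] (T T' : Finset F) (hT : T.card = 2)
    (hT' : T'.card = 2) : ∃ v u : F, v ≠ 0 ∧ T.image (fun y => v * y + u) = T' := by
  obtain ⟨x1, x2, hx, rfl⟩ := Finset.card_eq_two.mp hT
  obtain ⟨y1, y2, hy, rfl⟩ := Finset.card_eq_two.mp hT'
  have hx' : x1 - x2 ≠ 0 := sub_ne_zero.mpr hx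
  have hy' : y1 - y2 ≠ 0 := sub_ne_zero.mpr hy
  refine ⟨(y1 - y2) / (x1 - x2), y1 - (y1 - y2) / (x1 - x2) * x1, div_ne_zero hy' hx', ?_⟩
  rw [Finset.image_insert, Finset.image_singleton]
  have e1 : (y1 - y2) / (x1 - x2) * x1 + (y1 - (y1 - y2) / (x1 - x2) * x1) = y1 := by ring
  have e2 : (y1 - y2) / (x1 - x2) * x2 + (y1 - (y1 - y2) / (x1 - x2) * x1) = y2 := by
    field_simp
    ring
  rw [e1, e2]

lemma count_eq [DecidableEq F] (hF : Fintype.card F = p ^ m) (hm : 1 ≤ m) (i : ℕ)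
    (T T' : Finset F) (hT : T.card = 2) (hT' : T'.card = 2) :
    Nat.card {S : Finset F // S ∈ blocks1 p l F i ∧ T ⊆ S}
      = Nat.card {S : Finset F // S ∈ blocks1 p l F i ∧ T' ⊆ S} := by
  obtain ⟨v, u, hv, hTT'⟩ := exists_affine_two F T T' hT hT'
  have hinv1 : ∀ x : F, v⁻¹ * (v * x + u) + -(v⁻¹ * u) = x := by intro x; field_simp; ring
  have hinv2 : ∀ x : F, v * (v⁻¹ * x + -(v⁻¹ * u)) + u = x := by intro x; field_simp; ring
  have hT'T : T'.image (fun y => v⁻¹ * y + -(v⁻¹ * u)) = T := by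
    rw [← hTT', Finset.image_image]
    have : ((fun y => v⁻¹ * y + -(v⁻¹ * u)) ∘ fun y => v * y + u) = id := by
      funext x; simp [Function.comp, hinv1]
    rw [this, Finset.image_id]
  apply Nat.card_congr
  refine ⟨fun S => ⟨S.1.image (fun y => v * y + u),
      supp_hwt_affine p m l F hF hm i v u hv S.2.1, ?_⟩,
    fun S => ⟨S.1.image (fun y => v⁻¹ * y + -(v⁻¹ * u)),
      supp_hwt_affine p m l F hF hm i v⁻¹ (-(v⁻¹ * u)) (inv_ne_zero hv) S.2.1, ?_⟩,
    ?_, ?_⟩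
  · rw [← hTT']; exact Finset.image_subset_image S.2.2
  · rw [← hT'T]; exact Finset.image_subset_image S.2.2
  · rintro ⟨S, hS⟩
    ext1
    simp only [Finset.image_image]
    have : ((fun y => v⁻¹ * y + -(v⁻¹ * u)) ∘ fun y => v * y + u) = id := by
      funext x; simp [Function.comp, hinv1]
    rw [this, Finset.image_id]
  · rintro ⟨S, hS⟩
    ext1
    simp only [Finset.image_image]
    have : ((fun y => v * y + u) ∘ fun y => v⁻¹ * y + -(v⁻¹ * u)) = id := by
      funext x; simp [Function.comp, hinv2]
    rw [this, Finset.image_id]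

lemma sum_code_zero (hF : Fintype.card F = p ^ m) (hm : 3 ≤ m) (hodd : Odd p)
    {w : F → ZMod p} (hw : w ∈ codeC1 p l F) : ∑ x : F, w x = 0 := by
  obtain ⟨a, b, c, h, hwdef⟩ := hw
  have hp : p.Prime := Fact.out
  have hp3 : 3 ≤ p := by
    rcases Nat.lt_or_ge p 3 with h3 | h3
    · interval_cases p
      · exact absurd hp (by decide)
      · exact absurd hp (by decide)
      · exact absurd hodd (by decide)
    · exact h3
  have hq : 27 ≤ p ^ m := le_trans (by norm_num : (27:ℕ) ≤ 3 ^ 3)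
    (le_trans (Nat.pow_le_pow_left hp3 3) (Nat.pow_le_pow_right (by omega) hm))
  -- exponent reduction
  set r := l % m with hr
  have hrm : r < m := Nat.mod_lt _ (by omega)
  have hred : ∀ x : F, x ^ (p ^ l + 1) = x ^ (p ^ r + 1) := by
    intro x
    rw [pow_succ, pow_succ]
    congr 1
    have : m * (l / m) + r = l := by rw [hr]; exact Nat.div_add_mod l m
    rw [← this, pow_pow_reduce p m F hF]
  have hb1 : p ^ r + 1 < Fintype.card F - 1 := by
    rw [hF]
    have h1 : p ^ r ≤ p ^ (m - 1) := Nat.pow_le_pow_right (by omega) (by omega)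
    have h2 : p ^ m = p ^ (m - 1) * p := by
      rw [← pow_succ]; congr 1; omega
    have h3 : 9 ≤ p ^ (m - 1) := le_trans (by norm_num : (9:ℕ) ≤ 3 ^ 2)
      (le_trans (Nat.pow_le_pow_left hp3 2) (Nat.pow_le_pow_right (by omega) (by omega)))
    have h4 : p ^ (m - 1) * 3 ≤ p ^ (m - 1) * p := Nat.mul_le_mul_left _ hp3
    omega
  have hsum1 : ∑ x : F, x ^ (p ^ l + 1) = 0 := by
    calc ∑ x : F, x ^ (p ^ l + 1) = ∑ x : F, x ^ (p ^ r + 1) := by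
          exact Finset.sum_congr rfl fun x _ => hred x
      _ = 0 := FiniteField.sum_pow_lt_card_sub_one (K := F) _ hb1
  have hsum2 : ∑ x : F, x ^ 2 = 0 := by
    apply FiniteField.sum_pow_lt_card_sub_one
    rw [hF]; omega
  have hsum3 : ∑ x : F, x = 0 := by
    have h1 := FiniteField.sum_pow_lt_card_sub_one (K := F) 1 (by rw [hF]; omega)
    simp only [pow_one] at h1
    exact h1
  simp_rw [hwdef]
  rw [Finset.sum_add_distrib, ← map_sum]
  have : ∑ x : F, (a * x ^ (p ^ l + 1) + b * x ^ 2 + c * x) = 0 := by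
    have hsplit : ∑ x : F, (a * x ^ (p ^ l + 1) + b * x ^ 2 + c * x)
        = a * (∑ x : F, x ^ (p ^ l + 1)) + b * (∑ x : F, x ^ 2) + c * (∑ x : F, x) := by
      rw [Finset.sum_add_distrib, Finset.sum_add_distrib, ← Finset.mul_sum, ← Finset.mul_sum,
        ← Finset.mul_sum]
    rw [hsplit, hsum1, hsum2, hsum3]
    ring
  rw [this, map_zero, zero_add, Finset.sum_const, Finset.card_univ, hF]
  rw [nsmul_eq_mul, Nat.cast_pow, ZMod.natCast_self, zero_pow (by omega), zero_mul]

lemma hwt_ne_one (hF : Fintype.card F = p ^ m) (hm : 3 ≤ m) (hodd : Odd p)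
    {c : F → ZMod p} (hc : c ∈ codeC1 p l F) : hwt c ≠ 1 := by
  intro h1
  obtain ⟨x0, hx0⟩ := Finset.card_eq_one.mp h1
  have hx0mem : c x0 ≠ 0 := by
    have hx : x0 ∈ Finset.univ.filter fun x => c x ≠ 0 := by
      rw [hx0]; exact Finset.mem_singleton_self x0
    simpa using hx
  have hsum := sum_code_zero p m l F hF hm hodd hc
  have : ∑ x : F, c x = c x0 := by
    rw [← Finset.sum_filter_ne_zero Finset.univ, hx0, Finset.sum_singleton]
  rw [this] at hsum
  exact hx0mem hsum

end Aux

theorem stmt_8 (p m l : ℕ) [Fact p.Prime] (hodd : Odd p) (hm : 3 ≤ m) (hl : 1 ≤ l)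
    (hml : Nat.gcd m l = 1) (F : Type) [Field F] [Fintype F] [Algebra (ZMod p) F]
    (hF : Fintype.card F = p ^ m) :
    ∀ i : ℕ, 0 < i → (∃ c ∈ codeC1 p l F, hwt c = i) →
      ∃ lam : ℕ, 0 < lam ∧ ∀ T : Finset F, T.card = 2 →
        Nat.card {S : Finset F // S ∈ blocks1 p l F i ∧ T ⊆ S} = lam := by
  classical
  rintro i hi ⟨c, hc, hci⟩
  have hm1 : 1 ≤ m := by omega
  have h2i : 2 ≤ i := by
    have := hwt_ne_one p m l F hF hm hodd hc
    omega
  -- find two distinct points in the support of c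
  have hcard : 1 < (suppF c).card := by
    have : (suppF c).card = i := hci
    omega
  obtain ⟨t1, ht1, t2, ht2, ht12⟩ := Finset.one_lt_card.mp hcard
  set T₀ : Finset F := {t1, t2} with hT₀
  have hT₀card : T₀.card = 2 := Finset.card_pair ht12
  refine ⟨Nat.card {S : Finset F // S ∈ blocks1 p l F i ∧ T₀ ⊆ S}, ?_, ?_⟩
  · -- positivity
    have hmem : suppF c ∈ blocks1 p l F i := ⟨c, hc, hci, rfl⟩
    have hsub : T₀ ⊆ suppF c := by
      intro x hx
      rw [hT₀] at hx
      rcases Finset.mem_insert.mp hx with rfl | hx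
      · exact ht1
      · rw [Finset.mem_singleton.mp hx]; exact ht2
    haveI : Nonempty {S : Finset F // S ∈ blocks1 p l F i ∧ T₀ ⊆ S} :=
      ⟨⟨suppF c, hmem, hsub⟩⟩
    exact Nat.card_pos
  · intro T hT
    exact count_eq p m l F hF hm1 i T T₀ hT hT₀card
end
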